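/- A bipartite graph G is a bicluster graph (every connected component is a complete bipartite graph) if and only if G contains no two verticesu, v on the same side of the bipartition such that N(u) ∩ N(v) ≠ ∅ and N(u) △ N(v) ≠ ∅. -/
import Mathlib


def BipartiteWith {V : Type*} (G : SimpleGraph V) (side : V → Bool) : Prop :=
  ∀ u v, G.Adj u v → side u ≠ side v

/-- Every connected component of `G` is a bicluster (complete bipartite). -/
def BiclusterGraph {V : Type*} (G : SimpleGraph V) (side : V → Bool) : Prop :=
  ∀ u v, G.Reachable u v → side u ≠ side v → G.Adj u v

private lemma aux_walk {V : Type*} (G : SimpleGraph V) (side : V → Bool)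
    (hG : BipartiteWith G side)
    (hc : ∀ u v, side u = side v → (G.neighborSet u ∩ G.neighborSet v).Nonempty →
      ¬ (symmDiff (G.neighborSet u) (G.neighborSet v)).Nonempty) :
    ∀ {u v : V}, G.Walk u v →
      (side u = side v → G.neighborSet u = G.neighborSet v) ∧
      (side u ≠ side v → G.Adj u v) := by
  intro u v p
  induction p with
  | nil => exact ⟨fun _ => rfl, fun h => absurd rfl h⟩
  | @cons u w v h p ih =>
    have huw : side u ≠ side w := hG _ _ h
    by_cases hsv : side u = side v
    · have hwv : side w ≠ side v := fun hh => huw (hsv.trans hh.symm)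
      have hadj : G.Adj w v := ih.2 hwv
      have hne : (G.neighborSet u ∩ G.neighborSet v).Nonempty :=
        ⟨w, h, hadj.symm⟩
      have := hc u v hsv hne
      have heq : symmDiff (G.neighborSet u) (G.neighborSet v) = ∅ :=
        Set.not_nonempty_iff_eq_empty.mp this
      have : G.neighborSet u = G.neighborSet v := by
        have := symmDiff_eq_bot.mp (by simpa [Set.bot_eq_empty] using heq)
        exact this
      exact ⟨fun _ => this, fun hh => absurd hsv hh⟩
    · have hwv : side w = side v := by
        revert huw hsv; cases side u <;> cases side w <;> cases side v <;> simp
      have hNeq : G.neighborSet w = G.neighborSet v := ih.1 hwv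
      have : u ∈ G.neighborSet v := hNeq ▸ (h.symm : G.Adj w u)
      exact ⟨fun hh => absurd hh hsv, fun _ => this.symm⟩

theorem stmt_1 {V : Type*} (G : SimpleGraph V) (side : V → Bool)
    (hG : BipartiteWith G side) :
    BiclusterGraph G side ↔
      ¬ ∃ u v, side u = side v ∧ (G.neighborSet u ∩ G.neighborSet v).Nonempty ∧
        (symmDiff (G.neighborSet u) (G.neighborSet v)).Nonempty := by
  constructor
  · rintro hB ⟨u, v, hside, ⟨w, hwu, hwv⟩, ⟨x, hx⟩⟩
    rw [Set.mem_symmDiff] at hx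
    have hwu' : G.Adj u w := hwu
    have hwv' : G.Adj v w := hwv
    rcases hx with ⟨hxu, hxv⟩ | ⟨hxv, hxu⟩
    · -- x ∈ N(u) \ N(v)
      have hxu' : G.Adj u x := hxu
      have hreach : G.Reachable v x :=
        (hwv'.reachable.trans hwu'.symm.reachable).trans hxu'.reachable
      have hsx : side v ≠ side x := by
        have := hG _ _ hxu'
        rw [hside] at this; exact this
      exact hxv (hB v x hreach hsx)
    · have hxv' : G.Adj v x := hxv
      have hreach : G.Reachable u x :=
        (hwu'.reachable.trans hwv'.symm.reachable).trans hxv'.reachable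
      have hsx : side u ≠ side x := by
        have := hG _ _ hxv'
        rw [← hside] at this; exact this
      exact hxu (hB u x hreach hsx)
  · intro hc
    push_neg at hc
    intro u v hreach hside
    have hc' : ∀ u v, side u = side v → (G.neighborSet u ∩ G.neighborSet v).Nonempty →
        ¬ (symmDiff (G.neighborSet u) (G.neighborSet v)).Nonempty := by
      intro a b h1 h2
      rw [Set.not_nonempty_iff_eq_empty]; exact hc a b h1 h2
    obtain ⟨p⟩ := hreach
    exact (aux_walk G side hG hc' p).2 hside
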